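/- Let N ≥ 3 be odd, let ψ_g be the 1D graph state, and let ρ = ψ_g ψ_g† be the corresponding pure density matrix. Then the expectation values of the symmetrized certification operators are all exactly 1: Re(tr(ρ·U_X)) = 1, Re(tr(ρ·M_0)) = 1, Re(tr(ρ·M_{N−1})) = 1, and Re(tr(ρ·M_i)) = 1 for all 1 ≤ i ≤ N−2, where M_0 = X_0·Z_1 + Z_0·X_1, M_{N−1} = X_{N−2}·Z_{N−1} + Z_{N−2}·X_{N−1}, and M_i = Z_{i−1}·X_i·Z_{i+1} + Z_{i−1}·Z_i·X_{i+1} + X_{i−1}·Z_i·Z_{i+1}. (The paper's verification that the exact graph state passes the uniform-measurement certification with all measured quantities equal to one.) -/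

import Mathlib

open Matrix
open scoped ComplexOrder

/-- The single-site Pauli `X` operator on site `i` of `N` qubits. -/
def PauliX (N : ℕ) (i : Fin N) : Matrix (Fin N → Fin 2) (Fin N → Fin 2) ℂ :=
  Matrix.of fun f g => if f i ≠ g i ∧ ∀ j, j ≠ i → f j = g j then 1 else 0

/-- The single-site Pauli `Z` operator on site `i` of `N` qubits. -/
def PauliZ (N : ℕ) (i : Fin N) : Matrix (Fin N → Fin 2) (Fin N → Fin 2) ℂ :=
  Matrix.of fun f g => if f = g then (-1 : ℂ) ^ (f i : ℕ) else 0

/-- The uniform `X`-string `U_X = ∏_{i even} X_i` over the even 0-based sites. -/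
noncomputable def UX (N : ℕ) : Matrix (Fin N → Fin 2) (Fin N → Fin 2) ℂ :=
  (((List.finRange N).filter fun i : Fin N => (i : ℕ) % 2 = 0).map (PauliX N)).prod

/-- The 1D graph state on `N` qubits. -/
noncomputable def graphState (N : ℕ) : (Fin N → Fin 2) → ℂ := fun b =>
  (-1 : ℂ) ^ (∑ i : Fin N, if h : (i : ℕ) + 1 < N then
      (b i : ℕ) * (b ⟨(i : ℕ) + 1, h⟩ : ℕ) else 0)
    / (Real.sqrt 2 : ℂ) ^ N

namespace GraphCert

/-- sign character on `ZMod 2` -/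
def sgn (x : ZMod 2) : ℂ := if x = 0 then 1 else -1

lemma two_zmod : (1 + 1 : ZMod 2) = 0 := rfl

lemma sgn_add (x y : ZMod 2) : sgn (x + y) = sgn x * sgn y := by
  rcases (by decide : ∀ z : ZMod 2, z = 0 ∨ z = 1) x with rfl | rfl <;> rcases (by decide : ∀ z : ZMod 2, z = 0 ∨ z = 1) y with rfl | rfl <;> simp [sgn, two_zmod]

lemma sgn_sgn (x : ZMod 2) : sgn x * sgn x = 1 := by
  rcases (by decide : ∀ z : ZMod 2, z = 0 ∨ z = 1) x with rfl | rfl <;> simp [sgn]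

lemma sgn_add_one (x : ZMod 2) : sgn (x + 1) = - sgn x := by
  rcases (by decide : ∀ z : ZMod 2, z = 0 ∨ z = 1) x with rfl | rfl <;> simp [sgn, two_zmod]

lemma sgn_zero : sgn 0 = 1 := rfl

lemma neg_one_pow_eq_sgn (n : ℕ) : (-1 : ℂ) ^ n = sgn (n : ZMod 2) := by
  induction n with
  | zero => simp [sgn]
  | succ k ih =>
      rw [pow_succ, ih, Nat.cast_add, Nat.cast_one, sgn_add_one]
      ring

variable {N : ℕ}

/-- bits of a configuration, as a total function `ℕ → ZMod 2`. -/
def bit (b : Fin N → Fin 2) (j : ℕ) : ZMod 2 :=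
  if h : j < N then ((b ⟨j, h⟩ : ℕ) : ZMod 2) else 0

/-- parity exponent of the graph state. -/
def q (b : Fin N → Fin 2) : ZMod 2 := ∑ i ∈ Finset.range N, bit b i * bit b (i + 1)

lemma graphState_eq (b : Fin N → Fin 2) :
    graphState N b = sgn (q b) / (Real.sqrt 2 : ℂ) ^ N := by
  unfold graphState
  rw [neg_one_pow_eq_sgn]
  congr 2
  rw [Nat.cast_sum, q, ← Fin.sum_univ_eq_sum_range (fun i => bit b i * bit b (i + 1)) N]
  refine Finset.sum_congr rfl fun i _ => ?_
  by_cases h : (i : ℕ) + 1 < N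
  · rw [dif_pos h, Nat.cast_mul, bit, dif_pos i.isLt, bit, dif_pos h]
  · rw [dif_neg h, bit, dif_pos i.isLt, bit, dif_neg h, Nat.cast_zero, mul_zero]

/-- flip the bit at site `s`. -/
def flip (s : Fin N) (b : Fin N → Fin 2) : Fin N → Fin 2 :=
  Function.update b s (b s + 1)

lemma flip_flip (s : Fin N) (b : Fin N → Fin 2) : flip s (flip s b) = b := by
  funext j
  unfold flip
  by_cases h : j = s
  · subst h
    simp [Function.update_self]
    exact (by decide : ∀ x : Fin 2, x + 1 + 1 = x) (b j)
  · simp [Function.update_of_ne h]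

lemma flip_apply_ne (s : Fin N) (b : Fin N → Fin 2) {j : Fin N} (h : j ≠ s) :
    flip s b j = b j := Function.update_of_ne h _ _

lemma fin2_cast_add_one (x : Fin 2) : (((x + 1 : Fin 2) : ℕ) : ZMod 2) = ((x : ℕ) : ZMod 2) + 1 := by
  fin_cases x <;> rfl

lemma bit_flip (s : Fin N) (b : Fin N → Fin 2) (j : ℕ) :
    bit (flip s b) j = if j = (s : ℕ) then bit b j + 1 else bit b j := by
  by_cases hj : j = (s : ℕ)
  · subst hj
    rw [if_pos rfl]
    unfold bit
    rw [dif_pos s.isLt, dif_pos s.isLt]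
    have hs : (⟨(s : ℕ), s.isLt⟩ : Fin N) = s := rfl
    rw [hs]
    have : flip s b s = b s + 1 := Function.update_self _ _ _
    rw [this, fin2_cast_add_one]
  · rw [if_neg hj]
    unfold bit
    by_cases h : j < N
    · rw [dif_pos h, dif_pos h,
        flip_apply_ne s b (fun hc => hj (congrArg Fin.val hc))]
    · rw [dif_neg h, dif_neg h]

lemma q_flip (s : Fin N) (b : Fin N → Fin 2) :
    q (flip s b) = q b + (bit b ((s : ℕ) + 1)
      + (if (s : ℕ) = 0 then 0 else bit b ((s : ℕ) - 1))) := by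
  unfold q
  have hterm : ∀ i ∈ Finset.range N,
      bit (flip s b) i * bit (flip s b) (i + 1)
        = bit b i * bit b (i + 1) + ((if i = (s : ℕ) then bit b (i + 1) else 0)
            + (if i + 1 = (s : ℕ) then bit b i else 0)) := by
    intro i _
    rw [bit_flip, bit_flip]
    by_cases h1 : i = (s : ℕ)
    · rw [if_pos h1, if_neg (by omega), if_pos h1, if_neg (by omega)]
      ring
    · rw [if_neg h1, if_neg h1]
      by_cases h2 : i + 1 = (s : ℕ)
      · rw [if_pos h2, if_pos h2]
        ring
      · rw [if_neg h2, if_neg h2, add_zero, add_zero]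
  rw [Finset.sum_congr rfl hterm, Finset.sum_add_distrib, Finset.sum_add_distrib]
  congr 1
  congr 1
  · rw [Finset.sum_ite_eq' (Finset.range N) ((s : ℕ)) (fun i => bit b (i + 1)),
      if_pos (Finset.mem_range.2 s.isLt)]
  · by_cases hs : (s : ℕ) = 0
    · rw [if_pos hs, Finset.sum_eq_zero]
      intro i _
      rw [if_neg (by omega)]
    · rw [if_neg hs]
      have : ∀ i ∈ Finset.range N, (if i + 1 = (s : ℕ) then bit b i else 0)
          = (if i = (s : ℕ) - 1 then bit b i else 0) := by
        intro i _
        congr 1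
        simp only [eq_iff_iff]
        omega
      rw [Finset.sum_congr rfl this,
        Finset.sum_ite_eq' (Finset.range N) ((s : ℕ) - 1) (fun i => bit b i),
        if_pos (Finset.mem_range.2 (by have := s.isLt; omega))]

lemma mulVec_X (s : Fin N) (v : (Fin N → Fin 2) → ℂ) :
    PauliX N s *ᵥ v = fun b => v (flip s b) := by
  have fin2 : ∀ x y : Fin 2, ¬x = y ↔ y = x + 1 := by decide
  funext b
  simp only [Matrix.mulVec, dotProduct, PauliX, Matrix.of_apply]
  have key : ∀ g : Fin N → Fin 2,
      (b s ≠ g s ∧ ∀ j, j ≠ s → b j = g j) ↔ g = flip s b := by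
    intro g
    constructor
    · rintro ⟨h1, h2⟩
      funext j
      by_cases hj : j = s
      · subst hj
        rw [flip, Function.update_self]
        exact (fin2 (b j) (g j)).1 h1
      · rw [flip_apply_ne _ _ hj]
        exact (h2 j hj).symm
    · rintro rfl
      refine ⟨?_, fun j hj => (flip_apply_ne _ _ hj).symm⟩
      rw [flip, Function.update_self]
      exact (fin2 (b s) (b s + 1)).2 rfl
  simp only [key, ite_mul, one_mul, zero_mul, Finset.sum_ite_eq', Finset.mem_univ, if_true]

lemma mulVec_Z (s : Fin N) (v : (Fin N → Fin 2) → ℂ) :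
    PauliZ N s *ᵥ v = fun b => sgn (bit b (s : ℕ)) * v b := by
  funext b
  simp only [Matrix.mulVec, dotProduct, PauliZ, Matrix.of_apply]
  have : ∀ g, (if b = g then (-1 : ℂ) ^ ((b s : ℕ)) else 0) * v g
      = if g = b then ((-1 : ℂ) ^ ((b s : ℕ))) * v g else 0 := by
    intro g
    by_cases h : b = g
    · rw [if_pos h, if_pos h.symm]
    · rw [if_neg h, if_neg (fun hc => h hc.symm), zero_mul]
  rw [Finset.sum_congr rfl fun g _ => this g, Finset.sum_ite_eq', if_pos (Finset.mem_univ b),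
    neg_one_pow_eq_sgn]
  congr 2
  unfold bit
  rw [dif_pos s.isLt]

lemma trace_vmv (u v : (Fin N → Fin 2) → ℂ) (A : Matrix (Fin N → Fin 2) (Fin N → Fin 2) ℂ) :
    (vecMulVec u v * A).trace = ∑ c, v c * (A *ᵥ u) c := by
  unfold Matrix.trace Matrix.diag vecMulVec Matrix.mulVec dotProduct
  simp only [Matrix.mul_apply, Matrix.of_apply]
  rw [Finset.sum_comm]
  refine Finset.sum_congr rfl fun c _ => ?_
  rw [Finset.mul_sum]
  exact Finset.sum_congr rfl fun b _ => by ring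

lemma star_graphState (b : Fin N → Fin 2) :
    star (graphState N) b = graphState N b := by
  show star (graphState N b) = graphState N b
  rw [graphState_eq]
  have h1 : (starRingEnd ℂ) (sgn (q b)) = sgn (q b) := by
    unfold sgn
    split <;> simp
  have h2 : (starRingEnd ℂ) (((Real.sqrt 2 : ℝ) : ℂ) ^ N) = ((Real.sqrt 2 : ℝ) : ℂ) ^ N := by
    rw [map_pow, Complex.conj_ofReal]
  show (starRingEnd ℂ) _ = _
  rw [map_div₀, h1, h2]

lemma zmod_add_self (x : ZMod 2) : x + x = 0 := by fin_cases x <;> rfl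

lemma sqrt2_pow_sq : ((Real.sqrt 2 : ℝ) : ℂ) ^ N * ((Real.sqrt 2 : ℝ) : ℂ) ^ N
    = (2 : ℂ) ^ N := by
  rw [← mul_pow, ← Complex.ofReal_mul, Real.mul_self_sqrt (by norm_num)]
  norm_num

lemma card_configs : (Fintype.card (Fin N → Fin 2) : ℂ) = (2 : ℂ) ^ N := by
  rw [Fintype.card_fun]
  simp

lemma two_pow_ne : ((2 : ℂ) ^ N) ≠ 0 := by
  exact pow_ne_zero _ (by norm_num)

/-- Main reduction: trace of `ρ * A` where `A *ᵥ ψ = sgn ∘ ζ · ψ ∘ flip s`. -/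
lemma term_trace (s : Fin N) (A : Matrix (Fin N → Fin 2) (Fin N → Fin 2) ℂ)
    (ζ : (Fin N → Fin 2) → ZMod 2)
    (hA : A *ᵥ graphState N = fun b => sgn (ζ b) * graphState N (flip s b)) :
    (vecMulVec (graphState N) (star (graphState N)) * A).trace
      = (1 / (2 : ℂ) ^ N) * ∑ b : Fin N → Fin 2,
          sgn (ζ b + (bit b ((s : ℕ) + 1)
            + (if (s : ℕ) = 0 then 0 else bit b ((s : ℕ) - 1)))) := by
  rw [trace_vmv, hA, Finset.mul_sum]
  refine Finset.sum_congr rfl fun b _ => ?_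
  simp only []
  rw [star_graphState, graphState_eq, graphState_eq (flip s b), q_flip]
  set w := bit b ((s : ℕ) + 1) + (if (s : ℕ) = 0 then 0 else bit b ((s : ℕ) - 1)) with hw
  set r := ((Real.sqrt 2 : ℝ) : ℂ) ^ N with hr
  have key : sgn (q b) / r * (sgn (ζ b) * (sgn (q b + w) / r))
      = (sgn (q b) * sgn (q b)) * (sgn (ζ b) * sgn w) / (r * r) := by
    rw [sgn_add (q b) w]; ring
  rw [key, sgn_sgn, one_mul, hr, sqrt2_pow_sq, ← sgn_add]
  ring

/-- sum of a genuinely-signed character vanishes. -/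
lemma sum_sgn_bit_eq_zero (t : Fin N) (c : (Fin N → Fin 2) → ZMod 2)
    (hc : ∀ b, c (flip t b) = c b) :
    ∑ b : Fin N → Fin 2, sgn (bit b (t : ℕ) + c b) = 0 := by
  set S := ∑ b : Fin N → Fin 2, sgn (bit b (t : ℕ) + c b) with hS
  let e : (Fin N → Fin 2) ≃ (Fin N → Fin 2) := ⟨flip t, flip t, flip_flip t, flip_flip t⟩
  have h1 : ∑ b : Fin N → Fin 2, sgn (bit (flip t b) (t : ℕ) + c (flip t b)) = S :=
    Fintype.sum_equiv e _ _ (fun b => rfl)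
  have h2 : ∀ b : Fin N → Fin 2,
      sgn (bit (flip t b) (t : ℕ) + c (flip t b)) = - sgn (bit b (t : ℕ) + c b) := by
    intro b
    rw [hc, bit_flip, if_pos rfl, show bit b (t : ℕ) + 1 + c b = bit b (t : ℕ) + c b + 1 by ring,
      sgn_add_one]
  rw [Finset.sum_congr rfl fun b _ => h2 b, Finset.sum_neg_distrib] at h1
  have : S = 0 := by linear_combination (-1/2 : ℂ) * h1
  exact this

lemma sum_sgn_zero (f : (Fin N → Fin 2) → ZMod 2) (hf : ∀ b, f b = 0) :
    (1 / (2 : ℂ) ^ N) * ∑ b : Fin N → Fin 2, sgn (f b) = 1 := by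
  have : ∀ b : Fin N → Fin 2, sgn (f b) = 1 := fun b => by rw [hf b, sgn_zero]
  rw [Finset.sum_congr rfl fun b _ => this b, Finset.sum_const, Finset.card_univ, nsmul_eq_mul,
    card_configs, one_div, mul_one, inv_mul_cancel₀ two_pow_ne]

lemma prod_X_mulVec (l : List (Fin N)) (v : (Fin N → Fin 2) → ℂ) :
    ((l.map (PauliX N)).prod) *ᵥ v = fun b => v (l.foldl (fun b s => flip s b) b) := by
  induction l generalizing v with
  | nil => simp [Matrix.one_mulVec]
  | cons a l ih =>
      rw [List.map_cons, List.prod_cons, ← Matrix.mulVec_mulVec, ih, mulVec_X]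
      rfl

lemma foldl_flip_apply (l : List (Fin N)) (hl : l.Nodup) (b : Fin N → Fin 2) (j : Fin N) :
    (l.foldl (fun b s => flip s b) b) j = if j ∈ l then b j + 1 else b j := by
  induction l generalizing b with
  | nil => simp
  | cons a l ih =>
      have ha : a ∉ l := (List.nodup_cons.1 hl).1
      rw [List.foldl_cons, ih (List.nodup_cons.1 hl).2]
      by_cases hjl : j ∈ l
      · have hja : j ≠ a := fun h => ha (h ▸ hjl)
        rw [if_pos hjl, if_pos (List.mem_cons.2 (Or.inr hjl)), flip_apply_ne _ _ hja]
      · by_cases hja : j = a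
        · subst hja
          rw [if_neg hjl, if_pos (List.mem_cons.2 (Or.inl rfl)), flip, Function.update_self]
        · rw [if_neg hjl, if_neg (by simp [hja, hjl]), flip_apply_ne _ _ hja]

/-- flip all even sites. -/
def flipAll (b : Fin N → Fin 2) : Fin N → Fin 2 :=
  fun j => if (j : ℕ) % 2 = 0 then b j + 1 else b j

lemma UX_mulVec (v : (Fin N → Fin 2) → ℂ) :
    UX N *ᵥ v = fun b => v (flipAll b) := by
  unfold UX
  rw [prod_X_mulVec]
  funext b
  congr 1
  funext j
  rw [foldl_flip_apply _ (List.Nodup.filter _ (List.nodup_finRange N))]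
  unfold flipAll
  by_cases h : (j : ℕ) % 2 = 0
  · rw [if_pos h, if_pos (by simp [List.mem_filter, List.mem_finRange, h])]
  · rw [if_neg h, if_neg (by simp [List.mem_filter, List.mem_finRange, h])]

/-- even-site indicator. -/
def ev (j : ℕ) : ZMod 2 := if j % 2 = 0 ∧ j < N then 1 else 0

lemma bit_flipAll (b : Fin N → Fin 2) (j : ℕ) :
    bit (flipAll b) j = bit b j + ev (N := N) j := by
  unfold bit ev
  by_cases h : j < N
  · rw [dif_pos h, dif_pos h]
    show (((flipAll b) ⟨j, h⟩ : ℕ) : ZMod 2) = _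
    unfold flipAll
    by_cases hp : j % 2 = 0
    · rw [if_pos (show ((⟨j, h⟩ : Fin N) : ℕ) % 2 = 0 from hp), if_pos ⟨hp, h⟩,
        fin2_cast_add_one]
    · rw [if_neg (show ¬((⟨j, h⟩ : Fin N) : ℕ) % 2 = 0 from hp), if_neg (by tauto), add_zero]
  · rw [dif_neg h, dif_neg h, if_neg (by tauto), add_zero]

lemma q_flipAll (hodd : Odd N) (b : Fin N → Fin 2) : q (flipAll b) = q b := by
  obtain ⟨k, hk⟩ := hodd
  obtain ⟨m, hm⟩ : ∃ m, N = m + 1 := ⟨N - 1, by omega⟩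
  have hmev : m % 2 = 0 := by omega
  unfold q
  have hterm : ∀ i ∈ Finset.range N,
      bit (flipAll b) i * bit (flipAll b) (i + 1)
        = bit b i * bit b (i + 1)
          + (if i % 2 = 0 then bit b (i + 1) else bit b i) := by
    intro i hi
    have hi' := Finset.mem_range.1 hi
    rw [bit_flipAll, bit_flipAll]
    by_cases hp : i % 2 = 0
    · rw [if_pos hp]
      have h1 : ev (N := N) i = 1 := if_pos ⟨hp, hi'⟩
      have h2 : ev (N := N) (i + 1) = 0 := if_neg (by omega)
      rw [h1, h2, add_zero]
      ring
    · rw [if_neg hp]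
      have h1 : ev (N := N) i = 0 := if_neg (by tauto)
      have h2 : ev (N := N) (i + 1) = 1 := if_pos (by constructor <;> omega)
      rw [h1, h2, add_zero]
      ring
  rw [Finset.sum_congr rfl hterm, Finset.sum_add_distrib]
  have hzero : ∑ i ∈ Finset.range N,
      (if i % 2 = 0 then bit b (i + 1) else bit b i) = 0 := by
    rw [show Finset.range N = Finset.range (m + 1) from by rw [hm], Finset.sum_range_succ,
      if_pos hmev,
      show bit b (m + 1) = 0 from dif_neg (by omega), add_zero]
    refine Finset.sum_involution (fun i _ => if i % 2 = 0 then i + 1 else i - 1) ?_ ?_ ?_ ?_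
    · intro i hi
      have hi' := Finset.mem_range.1 hi
      by_cases hp : i % 2 = 0
      · rw [if_pos hp, if_pos hp, if_neg (by omega)]
        exact zmod_add_self _
      · rw [if_neg hp, if_neg hp, if_pos (by omega),
          show i - 1 + 1 = i from by omega]
        exact zmod_add_self _
    · intro i hi _
      by_cases hp : i % 2 = 0
      · rw [if_pos hp]; omega
      · rw [if_neg hp]; omega
    · intro i hi
      have hi' := Finset.mem_range.1 hi
      refine Finset.mem_range.2 ?_
      by_cases hp : i % 2 = 0
      · rw [if_pos hp]; omega
      · rw [if_neg hp]; omega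
    · intro i hi
      have hi' := Finset.mem_range.1 hi
      by_cases hp : i % 2 = 0
      · rw [if_pos hp, if_neg (by omega)]
        omega
      · rw [if_neg hp, if_pos (by omega)]
        omega
  rw [hzero, add_zero]

lemma UX_trace (hodd : Odd N) :
    (vecMulVec (graphState N) (star (graphState N)) * UX N).trace = 1 := by
  rw [trace_vmv, UX_mulVec]
  have : ∀ b : Fin N → Fin 2,
      star (graphState N) b * graphState N (flipAll b) = 1 / (2 : ℂ) ^ N := by
    intro b
    rw [star_graphState, graphState_eq, graphState_eq, q_flipAll hodd]
    rw [div_mul_div_comm, sgn_sgn, sqrt2_pow_sq]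
  rw [Finset.sum_congr rfl fun b _ => this b, Finset.sum_const, Finset.card_univ, nsmul_eq_mul,
    card_configs]
  field_simp

lemma mulVec_XZ (s c : Fin N) (hcs : (c : ℕ) ≠ (s : ℕ)) :
    (PauliX N s * PauliZ N c) *ᵥ graphState N
      = fun b => sgn (bit b (c : ℕ)) * graphState N (flip s b) := by
  rw [← Matrix.mulVec_mulVec, mulVec_Z, mulVec_X]
  funext b
  rw [bit_flip, if_neg hcs]

lemma mulVec_ZX (a s : Fin N) :
    (PauliZ N a * PauliX N s) *ᵥ graphState N
      = fun b => sgn (bit b (a : ℕ)) * graphState N (flip s b) := by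
  rw [← Matrix.mulVec_mulVec, mulVec_X, mulVec_Z]

lemma mulVec_ZXZ (a s c : Fin N) (hcs : (c : ℕ) ≠ (s : ℕ)) :
    (PauliZ N a * PauliX N s * PauliZ N c) *ᵥ graphState N
      = fun b => sgn (bit b (a : ℕ) + bit b (c : ℕ)) * graphState N (flip s b) := by
  rw [← Matrix.mulVec_mulVec, ← Matrix.mulVec_mulVec, mulVec_Z, mulVec_X, mulVec_Z]
  funext b
  dsimp only
  rw [bit_flip, if_neg hcs, sgn_add]
  ring

lemma mulVec_ZZX (a a' s : Fin N) :
    (PauliZ N a * PauliZ N a' * PauliX N s) *ᵥ graphState N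
      = fun b => sgn (bit b (a : ℕ) + bit b (a' : ℕ)) * graphState N (flip s b) := by
  rw [← Matrix.mulVec_mulVec, ← Matrix.mulVec_mulVec, mulVec_X, mulVec_Z, mulVec_Z]
  funext b
  dsimp only
  rw [sgn_add]
  ring

lemma mulVec_XZZ (s c c' : Fin N) (hcs : (c : ℕ) ≠ (s : ℕ)) (hcs' : (c' : ℕ) ≠ (s : ℕ)) :
    (PauliX N s * PauliZ N c * PauliZ N c') *ᵥ graphState N
      = fun b => sgn (bit b (c : ℕ) + bit b (c' : ℕ)) * graphState N (flip s b) := by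
  rw [← Matrix.mulVec_mulVec, ← Matrix.mulVec_mulVec, mulVec_Z, mulVec_X, mulVec_Z]
  funext b
  dsimp only
  rw [bit_flip, if_neg hcs, bit_flip, if_neg hcs', sgn_add]
  ring

lemma term_trace_one (s : Fin N) (A : Matrix (Fin N → Fin 2) (Fin N → Fin 2) ℂ)
    (ζ : (Fin N → Fin 2) → ZMod 2)
    (hA : A *ᵥ graphState N = fun b => sgn (ζ b) * graphState N (flip s b))
    (hz : ∀ b, ζ b + (bit b ((s : ℕ) + 1)
        + (if (s : ℕ) = 0 then 0 else bit b ((s : ℕ) - 1))) = 0) :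
    (vecMulVec (graphState N) (star (graphState N)) * A).trace = 1 := by
  rw [term_trace s A ζ hA]
  exact sum_sgn_zero _ hz

lemma term_trace_zero (s : Fin N) (A : Matrix (Fin N → Fin 2) (Fin N → Fin 2) ℂ)
    (ζ : (Fin N → Fin 2) → ZMod 2)
    (hA : A *ᵥ graphState N = fun b => sgn (ζ b) * graphState N (flip s b))
    (t : Fin N) (c : (Fin N → Fin 2) → ZMod 2) (hc : ∀ b, c (flip t b) = c b)
    (hz : ∀ b, ζ b + (bit b ((s : ℕ) + 1)
        + (if (s : ℕ) = 0 then 0 else bit b ((s : ℕ) - 1))) = bit b (t : ℕ) + c b) :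
    (vecMulVec (graphState N) (star (graphState N)) * A).trace = 0 := by
  rw [term_trace s A ζ hA,
    Finset.sum_congr rfl fun b _ => congrArg sgn (hz b),
    sum_sgn_bit_eq_zero t c hc, mul_zero]

section Terms

variable {N : ℕ}

lemma tr_X0Z1 (hN : 3 ≤ N) (h0 : 0 < N) (h1 : 1 < N) :
    (vecMulVec (graphState N) (star (graphState N)) *
      (PauliX N ⟨0, h0⟩ * PauliZ N ⟨1, h1⟩)).trace = 1 := by
  refine term_trace_one ⟨0, h0⟩ _ (fun b => bit b 1)
    (mulVec_XZ ⟨0, h0⟩ ⟨1, h1⟩ (show (1 : ℕ) ≠ 0 by omega)) ?_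
  intro b
  show bit b 1 + (bit b (0 + 1) + if (0 : ℕ) = 0 then 0 else bit b (0 - 1)) = 0
  rw [if_pos rfl, zero_add, add_zero]
  exact zmod_add_self _

lemma tr_Z0X1 (hN : 3 ≤ N) (h0 : 0 < N) (h1 : 1 < N) :
    (vecMulVec (graphState N) (star (graphState N)) *
      (PauliZ N ⟨0, h0⟩ * PauliX N ⟨1, h1⟩)).trace = 0 := by
  refine term_trace_zero ⟨1, h1⟩ _ (fun b => bit b 0)
    (mulVec_ZX ⟨0, h0⟩ ⟨1, h1⟩) ⟨2, by omega⟩ (fun _ => 0) (fun _ => rfl) ?_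
  intro b
  show bit b 0 + (bit b (1 + 1) + if (1 : ℕ) = 0 then 0 else bit b (1 - 1)) = bit b 2 + 0
  rw [if_neg (by omega), show (1 : ℕ) + 1 = 2 from rfl, show (1 : ℕ) - 1 = 0 from rfl]
  exact (by decide : ∀ x y : ZMod 2, x + (y + x) = y + 0) _ _

lemma tr_XZ_end (hN : 3 ≤ N) (h0 : N - 2 < N) (h1 : N - 1 < N) :
    (vecMulVec (graphState N) (star (graphState N)) *
      (PauliX N ⟨N - 2, h0⟩ * PauliZ N ⟨N - 1, h1⟩)).trace = 0 := by
  refine term_trace_zero ⟨N - 2, h0⟩ _ (fun b => bit b (N - 1))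
    (mulVec_XZ ⟨N - 2, h0⟩ ⟨N - 1, h1⟩ (show N - 1 ≠ N - 2 by omega)) ⟨N - 3, by omega⟩ (fun _ => 0)
    (fun _ => rfl) ?_
  intro b
  show bit b (N - 1) + (bit b (N - 2 + 1) + if N - 2 = 0 then 0 else bit b (N - 2 - 1))
      = bit b (N - 3) + 0
  rw [if_neg (by omega), show N - 2 + 1 = N - 1 from by omega,
    show N - 2 - 1 = N - 3 from by omega]
  exact (by decide : ∀ x y : ZMod 2, x + (x + y) = y + 0) _ _

lemma tr_ZX_end (hN : 3 ≤ N) (h0 : N - 2 < N) (h1 : N - 1 < N) :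
    (vecMulVec (graphState N) (star (graphState N)) *
      (PauliZ N ⟨N - 2, h0⟩ * PauliX N ⟨N - 1, h1⟩)).trace = 1 := by
  refine term_trace_one ⟨N - 1, h1⟩ _ (fun b => bit b (N - 2))
    (mulVec_ZX ⟨N - 2, h0⟩ ⟨N - 1, h1⟩) ?_
  intro b
  show bit b (N - 2) + (bit b (N - 1 + 1) + if N - 1 = 0 then 0 else bit b (N - 1 - 1)) = 0
  rw [if_neg (by omega), show N - 1 + 1 = N from by omega,
    show N - 1 - 1 = N - 2 from by omega, show bit b N = (0 : ZMod 2) from dif_neg (by omega)]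
  exact (by decide : ∀ x : ZMod 2, x + (0 + x) = 0) _

lemma tr_ZXZ (j : ℕ) (hj : j + 2 < N) :
    (vecMulVec (graphState N) (star (graphState N)) *
      (PauliZ N ⟨j, Nat.lt_of_le_of_lt (Nat.le_add_right j 2) hj⟩ * PauliX N ⟨j + 1, Nat.lt_of_le_of_lt (Nat.le_add_right (j + 1) 1) hj⟩ * PauliZ N ⟨j + 2, hj⟩)).trace
      = 1 := by
  refine term_trace_one ⟨j + 1, Nat.lt_of_le_of_lt (Nat.le_add_right (j + 1) 1) hj⟩ _ (fun b => bit b j + bit b (j + 2))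
    (mulVec_ZXZ ⟨j, Nat.lt_of_le_of_lt (Nat.le_add_right j 2) hj⟩ ⟨j + 1, Nat.lt_of_le_of_lt (Nat.le_add_right (j + 1) 1) hj⟩ ⟨j + 2, hj⟩ (show j + 2 ≠ j + 1 by omega)) ?_
  intro b
  show bit b j + bit b (j + 2)
      + (bit b (j + 1 + 1) + if j + 1 = 0 then 0 else bit b (j + 1 - 1)) = 0
  rw [if_neg (by omega), show j + 1 + 1 = j + 2 from by omega,
    show j + 1 - 1 = j from by omega]
  exact (by decide : ∀ x y : ZMod 2, x + y + (y + x) = 0) _ _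

lemma tr_ZZX (j : ℕ) (hj : j + 2 < N) :
    (vecMulVec (graphState N) (star (graphState N)) *
      (PauliZ N ⟨j, Nat.lt_of_le_of_lt (Nat.le_add_right j 2) hj⟩ * PauliZ N ⟨j + 1, Nat.lt_of_le_of_lt (Nat.le_add_right (j + 1) 1) hj⟩ * PauliX N ⟨j + 2, hj⟩)).trace
      = 0 := by
  refine term_trace_zero ⟨j + 2, hj⟩ _ (fun b => bit b j + bit b (j + 1))
    (mulVec_ZZX ⟨j, Nat.lt_of_le_of_lt (Nat.le_add_right j 2) hj⟩ ⟨j + 1, Nat.lt_of_le_of_lt (Nat.le_add_right (j + 1) 1) hj⟩ ⟨j + 2, hj⟩) ⟨j, Nat.lt_of_le_of_lt (Nat.le_add_right j 2) hj⟩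
    (fun b => bit b (j + 3)) ?_ ?_
  · intro b
    rw [bit_flip, if_neg (show j + 3 ≠ j by omega)]
  · intro b
    show bit b j + bit b (j + 1)
        + (bit b (j + 2 + 1) + if j + 2 = 0 then 0 else bit b (j + 2 - 1))
        = bit b j + bit b (j + 3)
    rw [if_neg (by omega), show j + 2 + 1 = j + 3 from by omega,
      show j + 2 - 1 = j + 1 from by omega]
    exact (by decide : ∀ x y z : ZMod 2, x + y + (z + y) = x + z) _ _ _

lemma tr_XZZ (j : ℕ) (hj : j + 2 < N) :
    (vecMulVec (graphState N) (star (graphState N)) *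
      (PauliX N ⟨j, Nat.lt_of_le_of_lt (Nat.le_add_right j 2) hj⟩ * PauliZ N ⟨j + 1, Nat.lt_of_le_of_lt (Nat.le_add_right (j + 1) 1) hj⟩ * PauliZ N ⟨j + 2, hj⟩)).trace
      = 0 := by
  refine term_trace_zero ⟨j, Nat.lt_of_le_of_lt (Nat.le_add_right j 2) hj⟩ _ (fun b => bit b (j + 1) + bit b (j + 2))
    (mulVec_XZZ ⟨j, Nat.lt_of_le_of_lt (Nat.le_add_right j 2) hj⟩ ⟨j + 1, Nat.lt_of_le_of_lt (Nat.le_add_right (j + 1) 1) hj⟩ ⟨j + 2, hj⟩ (show j + 1 ≠ j by omega)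
      (show j + 2 ≠ j by omega))
    ⟨j + 2, hj⟩ (fun b => if j = 0 then 0 else bit b (j - 1)) ?_ ?_
  · intro b
    by_cases hj0 : j = 0
    · rw [if_pos hj0, if_pos hj0]
    · rw [if_neg hj0, if_neg hj0, bit_flip, if_neg (show j - 1 ≠ j + 2 by omega)]
  · intro b
    show bit b (j + 1) + bit b (j + 2)
        + (bit b (j + 1) + if j = 0 then 0 else bit b (j - 1))
        = bit b (j + 2) + (if j = 0 then 0 else bit b (j - 1))
    exact (by decide : ∀ x y c : ZMod 2, x + y + (x + c) = y + c) _ _ _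

end Terms

end GraphCert

/-- The exact graph state passes the uniform-measurement certification: in the pure state
`ρ = ψ_g ψ_g†`, the expectation values of `U_X` and of all the symmetrized certification
operators `M_0`, `M_{N−1}`, and `M_i` (`1 ≤ i ≤ N−2`, parameterized by `j = i − 1`)
are all exactly 1. -/
theorem graphState_certification_values_one
    (N : ℕ) (hN : 3 ≤ N) (hodd : Odd N) :
    ((vecMulVec (graphState N) (star (graphState N)) * UX N).trace).re = 1 ∧
    ((vecMulVec (graphState N) (star (graphState N)) *
        (PauliX N ⟨0, by omega⟩ * PauliZ N ⟨1, by omega⟩ +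
         PauliZ N ⟨0, by omega⟩ * PauliX N ⟨1, by omega⟩)).trace).re = 1 ∧
    ((vecMulVec (graphState N) (star (graphState N)) *
        (PauliX N ⟨N - 2, by omega⟩ * PauliZ N ⟨N - 1, by omega⟩ +
         PauliZ N ⟨N - 2, by omega⟩ * PauliX N ⟨N - 1, by omega⟩)).trace).re = 1 ∧
    ∀ j : ℕ, ∀ hj : j + 2 < N,
      ((vecMulVec (graphState N) (star (graphState N)) *
          (PauliZ N ⟨j, by omega⟩ * PauliX N ⟨j + 1, by omega⟩ * PauliZ N ⟨j + 2, hj⟩ +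
           PauliZ N ⟨j, by omega⟩ * PauliZ N ⟨j + 1, by omega⟩ * PauliX N ⟨j + 2, hj⟩ +
           PauliX N ⟨j, by omega⟩ * PauliZ N ⟨j + 1, by omega⟩ *
             PauliZ N ⟨j + 2, hj⟩)).trace).re = 1 := by
  refine ⟨?_, ?_, ?_, ?_⟩
  · rw [GraphCert.UX_trace hodd]
    norm_num
  · rw [Matrix.mul_add, Matrix.trace_add, GraphCert.tr_X0Z1 hN, GraphCert.tr_Z0X1 hN]
    norm_num
  · rw [Matrix.mul_add, Matrix.trace_add, GraphCert.tr_XZ_end hN, GraphCert.tr_ZX_end hN]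
    norm_num
  · intro j hj
    rw [Matrix.mul_add, Matrix.mul_add, Matrix.trace_add, Matrix.trace_add,
      GraphCert.tr_ZXZ j hj, GraphCert.tr_ZZX j hj, GraphCert.tr_XZZ j hj]
    norm_num
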